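/- Let M̂1 = {(x̂^(k), p̂^(k))} and M̂2 = {(ŷ^(k), q̂^(k))} be RochetNet menus indexed by {0,...,K}, let K1, K2 ⊆ {0,...,K}, and let φ : {0,...,K} → K1 × K2 be a bijection, with components φ1, φ2, such that for every k: (x̂^(k), p̂^(k)) = (x̂^(φ1(k)), p̂^(φ1(k))) and (ŷ^(k), q̂^(k)) = (ŷ^(φ2(k)), q̂^(φ2(k))). Assume that with F-probability 1 the buyer's selected option in M̂1 lies in K1 and the buyer's selected option in M̂2 lies in K2. Then for every λ ∈ [0,1], the convex combination M = λ M̂1 + (1−λ) M̂2 satisfies Rev(M) ≥ λ Rev(M̂1) + (1−λ) Rev(M̂2). -/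

import Mathlib

open MeasureTheory Finset

namespace RN

/-- A RochetNet menu: for each of the `K+1` option indices, an allocation in `[0,1]^n`
and a price. -/
abbrev Menu (n K : ℕ) := Fin (K + 1) → (Fin n → ℝ) × ℝ

/-- Inner product of a valuation and an allocation. -/
def dotp {n : ℕ} (v x : Fin n → ℝ) : ℝ := ∑ j, v j * x j

/-- A valid menu: allocations in `[0,1]^n`, nonnegative prices, default option `(0,0)`. -/
def IsMenu {n K : ℕ} (M : Menu n K) : Prop :=
  (∀ k j, 0 ≤ (M k).1 j ∧ (M k).1 j ≤ 1) ∧ (∀ k, 0 ≤ (M k).2) ∧ M 0 = 0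

/-- Utility of option `k` for valuation `v`. -/
def util {n K : ℕ} (M : Menu n K) (v : Fin n → ℝ) (k : Fin (K + 1)) : ℝ :=
  dotp v (M k).1 - (M k).2

/-- Price extracted at valuation `v`: the maximal price among utility-maximizing options. -/
noncomputable def price {n K : ℕ} (M : Menu n K) (v : Fin n → ℝ) : ℝ :=
  sSup {p : ℝ | ∃ k, (∀ k', util M v k' ≤ util M v k) ∧ p = (M k).2}

/-- Option `k` is the buyer's selected option at `v`: it maximizes utility and, among
utility maximizers, has maximal price. -/
def Selected {n K : ℕ} (M : Menu n K) (v : Fin n → ℝ) (k : Fin (K + 1)) : Prop :=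
  (∀ k', util M v k' ≤ util M v k) ∧ (M k).2 = price M v

/-- The set of valuations. -/
def V (n : ℕ) : Set (Fin n → ℝ) :=
  {v | (∀ j, 0 ≤ v j ∧ v j ≤ 1) ∧ ∑ j, v j ≤ 1}

/-- Expected revenue of menu `M` under valuation distribution `F`. -/
noncomputable def Rev {n K : ℕ} (F : Measure (Fin n → ℝ)) (M : Menu n K) : ℝ :=
  ∫ v, price M v ∂F

/-- Option-wise convex combination `lam • M + (1 - lam) • M'` of two menus. -/
noncomputable def comb {n K : ℕ} (lam : ℝ) (M M' : Menu n K) : Menu n K :=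
  fun k => (fun j => lam * (M k).1 j + (1 - lam) * (M' k).1 j,
            lam * (M k).2 + (1 - lam) * (M' k).2)

/-- `M` is `ε`-reducible: some subset `K'` of options containing the default option, of
cardinality at most `√(K+1)`, contains the buyer's selected option with probability
at least `1 - ε`. -/
def Reducible {n K : ℕ} (F : Measure (Fin n → ℝ)) (M : Menu n K) (ε : ℝ) : Prop :=
  ∃ K' : Finset (Fin (K + 1)), 0 ∈ K' ∧ (K'.card : ℝ) ≤ Real.sqrt (K + 1) ∧
    (F {v | ∃ k ∈ K', Selected M v k}).toReal ≥ 1 - ε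

/-- `M₁` and `M₂` are `ε`-mode-connected by a piecewise linear path with `pieces` linear
pieces, all whose menus are valid and have revenue at least `min (Rev M₁) (Rev M₂) - ε`. -/
def PLConnected {n K : ℕ} (F : Measure (Fin n → ℝ)) (M₁ M₂ : Menu n K) (ε : ℝ)
    (pieces : ℕ) : Prop :=
  ∃ P : Fin (pieces + 1) → Menu n K, P 0 = M₁ ∧ P (Fin.last pieces) = M₂ ∧
    (∀ i, IsMenu (P i)) ∧
    ∀ i : Fin pieces, ∀ lam ∈ Set.Icc (0 : ℝ) 1,
      Rev F (comb lam (P i.castSucc) (P i.succ)) ≥ min (Rev F M₁) (Rev F M₂) - ε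

variable {n K : ℕ}


def priceSet (M : Menu n K) (v : Fin n → ℝ) : Set ℝ :=
  {p : ℝ | ∃ k, (∀ k', util M v k' ≤ util M v k) ∧ p = (M k).2}

lemma price_def (M : Menu n K) (v : Fin n → ℝ) : price M v = sSup (priceSet M v) := rfl

lemma priceSet_finite (M : Menu n K) (v : Fin n → ℝ) : (priceSet M v).Finite := by
  apply Set.Finite.subset (Set.finite_range fun k => (M k).2)
  rintro p ⟨k, _, rfl⟩; exact ⟨k, rfl⟩

lemma priceSet_nonempty (M : Menu n K) (v : Fin n → ℝ) : (priceSet M v).Nonempty := by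
  obtain ⟨k, hk⟩ := Finite.exists_max (util M v)
  exact ⟨(M k).2, k, hk, rfl⟩

lemma price_mem (M : Menu n K) (v : Fin n → ℝ) : price M v ∈ priceSet M v :=
  Set.Nonempty.csSup_mem (priceSet_nonempty M v) (priceSet_finite M v)

lemma price_ge (M : Menu n K) (v : Fin n → ℝ) (k : Fin (K + 1))
    (hk : ∀ k', util M v k' ≤ util M v k) : (M k).2 ≤ price M v :=
  le_csSup ((priceSet_finite M v).bddAbove) ⟨k, hk, rfl⟩

lemma price_nonneg (M : Menu n K) (hp : ∀ k, 0 ≤ (M k).2) (v : Fin n → ℝ) :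
    0 ≤ price M v := by
  obtain ⟨k, hk, he⟩ := price_mem M v
  rw [he]; exact hp k

lemma price_le (M : Menu n K) (v : Fin n → ℝ) :
    price M v ≤ univ.sup' ⟨0, mem_univ 0⟩ (fun k => (M k).2) := by
  obtain ⟨k, hk, he⟩ := price_mem M v
  rw [he]; exact le_sup' (fun k => (M k).2) (mem_univ k)

lemma measurable_util (M : Menu n K) (k : Fin (K + 1)) :
    Measurable fun v => util M v k := by
  unfold util dotp
  exact (Finset.measurable_sum _ fun j _ => (measurable_pi_apply j).mul_const _).sub
    measurable_const

lemma measurableSet_maxset (M : Menu n K) (k : Fin (K + 1)) :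
    MeasurableSet {v : Fin n → ℝ | ∀ k', util M v k' ≤ util M v k} := by
  rw [Set.setOf_forall]
  exact MeasurableSet.iInter fun k' =>
    measurableSet_le (measurable_util M k') (measurable_util M k)

lemma price_eq_sup' (M : Menu n K) (hp : ∀ k, 0 ≤ (M k).2) (v : Fin n → ℝ) :
    price M v = univ.sup' ⟨0, mem_univ 0⟩
      (fun k => if ∀ k', util M v k' ≤ util M v k then (M k).2 else 0) := by
  apply le_antisymm
  · obtain ⟨k, hk, he⟩ := price_mem M v
    rw [he]
    calc (M k).2 = if ∀ k', util M v k' ≤ util M v k then (M k).2 else 0 := by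
          rw [if_pos hk]
      _ ≤ _ := le_sup' (fun k => if ∀ k', util M v k' ≤ util M v k then (M k).2 else 0)
          (mem_univ k)
  · apply Finset.sup'_le
    intro k _
    by_cases h : ∀ k', util M v k' ≤ util M v k
    · rw [if_pos h]; exact price_ge M v k h
    · rw [if_neg h]; exact price_nonneg M hp v

lemma measurable_price (M : Menu n K) (hp : ∀ k, 0 ≤ (M k).2) :
    Measurable (price M) := by
  have : price M = fun v => univ.sup' ⟨0, mem_univ 0⟩
      (fun k => if ∀ k', util M v k' ≤ util M v k then (M k).2 else 0) :=
    funext (price_eq_sup' M hp)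
  rw [this]
  have hm : Measurable (univ.sup' (⟨0, mem_univ 0⟩ : (univ : Finset (Fin (K+1))).Nonempty)
      (fun k v => if ∀ k', util M v k' ≤ util M v k then (M k).2 else 0)) :=
    Finset.measurable_sup' _ fun k _ =>
      Measurable.ite (measurableSet_maxset M k) measurable_const measurable_const
  convert hm using 1
  funext v
  exact (Finset.sup'_apply (C := fun _ : Fin n → ℝ => ℝ) (s := univ) ⟨0, mem_univ 0⟩ (fun k v => if ∀ k', util M v k' ≤ util M v k then (M k).2 else 0) v).symm

lemma integrable_price (F : Measure (Fin n → ℝ)) [IsProbabilityMeasure F]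
    (M : Menu n K) (hp : ∀ k, 0 ≤ (M k).2) : Integrable (price M) F := by
  refine ⟨(measurable_price M hp).aestronglyMeasurable, ?_⟩
  apply HasFiniteIntegral.of_bounded
    (C := univ.sup' ⟨0, mem_univ 0⟩ (fun k => (M k).2))
  filter_upwards with v
  rw [Real.norm_eq_abs, abs_of_nonneg (price_nonneg M hp v)]
  exact price_le M v


lemma util_comb (lam : ℝ) (M M' : Menu n K) (v : Fin n → ℝ) (k : Fin (K + 1)) :
    util (comb lam M M') v k = lam * util M v k + (1 - lam) * util M' v k := by
  unfold util comb dotp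
  simp only
  have h : (∑ j, v j * (lam * (M k).1 j + (1 - lam) * (M' k).1 j))
      = lam * ∑ j, v j * (M k).1 j + (1 - lam) * ∑ j, v j * (M' k).1 j := by
    rw [Finset.mul_sum, Finset.mul_sum, ← Finset.sum_add_distrib]
    exact Finset.sum_congr rfl fun j _ => by ring
  rw [h]; ring

lemma measurableSet_sel (M : Menu n K) (hp : ∀ k, 0 ≤ (M k).2)
    (Ks : Finset (Fin (K + 1))) :
    MeasurableSet {v : Fin n → ℝ | ∃ k ∈ Ks, Selected M v k} := by
  have h : {v : Fin n → ℝ | ∃ k ∈ Ks, Selected M v k}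
      = ⋃ k ∈ Ks, ({v : Fin n → ℝ | ∀ k', util M v k' ≤ util M v k}
          ∩ {v : Fin n → ℝ | (M k).2 = price M v}) := by
    ext v
    simp only [Set.mem_setOf_eq, Set.mem_iUnion, Set.mem_inter_iff, Selected]
    tauto
  rw [h]
  exact MeasurableSet.biUnion Ks.countable_toSet fun k _ =>
    (measurableSet_maxset M k).inter
      (measurableSet_eq_fun measurable_const (measurable_price M hp))

/-- Let `N₁`, `N₂` be menus, `K₁, K₂ ⊆ {0,…,K}`, and
`φ : {0,…,K} → K₁ × K₂` a bijection with components `φ₁, φ₂` such that the `k`-th option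
of `N₁` equals its `φ₁ k`-th option and the `k`-th option of `N₂` equals its `φ₂ k`-th
option.  If with probability `1` the selected option of `N₁` lies in `K₁` and the
selected option of `N₂` lies in `K₂`, then for every `lam ∈ [0,1]` the convex
combination `lam • N₁ + (1-lam) • N₂` has revenue at least
`lam * Rev N₁ + (1-lam) * Rev N₂`. -/
theorem statement3 {n K : ℕ} (F : Measure (Fin n → ℝ)) [IsProbabilityMeasure F]
    (hFV : F (V n) = 1) (N₁ N₂ : Menu n K) (hN₁ : IsMenu N₁) (hN₂ : IsMenu N₂)
    (K₁ K₂ : Finset (Fin (K + 1)))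
    (φ : Fin (K + 1) → Fin (K + 1) × Fin (K + 1))
    (hφinj : Function.Injective φ)
    (hφmem : ∀ k, (φ k).1 ∈ K₁ ∧ (φ k).2 ∈ K₂)
    (hφsurj : ∀ p : Fin (K + 1) × Fin (K + 1), p.1 ∈ K₁ → p.2 ∈ K₂ → ∃ k, φ k = p)
    (hrep₁ : ∀ k, N₁ k = N₁ (φ k).1) (hrep₂ : ∀ k, N₂ k = N₂ (φ k).2)
    (hsel₁ : F {v | ∃ k ∈ K₁, Selected N₁ v k} = 1)
    (hsel₂ : F {v | ∃ k ∈ K₂, Selected N₂ v k} = 1) :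
    ∀ lam ∈ Set.Icc (0 : ℝ) 1,
      Rev F (comb lam N₁ N₂) ≥ lam * Rev F N₁ + (1 - lam) * Rev F N₂ := by
  intro lam hlam
  obtain ⟨hl0, hl1⟩ := hlam
  have hp₁ : ∀ k, 0 ≤ (N₁ k).2 := hN₁.2.1
  have hp₂ : ∀ k, 0 ≤ (N₂ k).2 := hN₂.2.1
  have hl1' : (0:ℝ) ≤ 1 - lam := by linarith
  have hpc : ∀ k, 0 ≤ ((comb lam N₁ N₂) k).2 := fun k =>
    add_nonneg (mul_nonneg hl0 (hp₁ k)) (mul_nonneg hl1' (hp₂ k))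
  have hae₁ : ∀ᵐ v ∂F, ∃ k ∈ K₁, Selected N₁ v k := by
    rw [MeasureTheory.ae_iff]
    have := (prob_compl_eq_zero_iff (measurableSet_sel N₁ hp₁ K₁)).mpr hsel₁
    simpa [Set.compl_setOf] using this
  have hae₂ : ∀ᵐ v ∂F, ∃ k ∈ K₂, Selected N₂ v k := by
    rw [MeasureTheory.ae_iff]
    have := (prob_compl_eq_zero_iff (measurableSet_sel N₂ hp₂ K₂)).mpr hsel₂
    simpa [Set.compl_setOf] using this
  have key : ∀ᵐ v ∂F,
      lam * price N₁ v + (1 - lam) * price N₂ v ≤ price (comb lam N₁ N₂) v := by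
    filter_upwards [hae₁, hae₂] with v hv₁ hv₂
    obtain ⟨k₁, hk₁K, hk₁max, hk₁p⟩ := hv₁
    obtain ⟨k₂, hk₂K, hk₂max, hk₂p⟩ := hv₂
    obtain ⟨k, hk⟩ := hφsurj (k₁, k₂) hk₁K hk₂K
    have e₁ : N₁ k = N₁ k₁ := by rw [hrep₁ k, hk]
    have e₂ : N₂ k = N₂ k₂ := by rw [hrep₂ k, hk]
    have hu₁ : util N₁ v k = util N₁ v k₁ := by unfold util; rw [e₁]
    have hu₂ : util N₂ v k = util N₂ v k₂ := by unfold util; rw [e₂]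
    have hmax : ∀ k', util (comb lam N₁ N₂) v k' ≤ util (comb lam N₁ N₂) v k := by
      intro k'
      rw [util_comb, util_comb, hu₁, hu₂]
      have h1 := hk₁max k'
      have h2 := hk₂max k'
      nlinarith
    have hle := price_ge (comb lam N₁ N₂) v k hmax
    calc lam * price N₁ v + (1 - lam) * price N₂ v
        = ((comb lam N₁ N₂) k).2 := by
          show _ = lam * (N₁ k).2 + (1 - lam) * (N₂ k).2
          rw [e₁, e₂, hk₁p, hk₂p]
      _ ≤ price (comb lam N₁ N₂) v := hle
  have hint₁ : Integrable (price N₁) F := integrable_price F N₁ hp₁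
  have hint₂ : Integrable (price N₂) F := integrable_price F N₂ hp₂
  have hintc : Integrable (price (comb lam N₁ N₂)) F :=
    integrable_price F (comb lam N₁ N₂) hpc
  calc lam * Rev F N₁ + (1 - lam) * Rev F N₂
      = ∫ v, (lam * price N₁ v + (1 - lam) * price N₂ v) ∂F := by
        rw [integral_add (hint₁.const_mul lam) (hint₂.const_mul (1 - lam)),
          integral_const_mul, integral_const_mul]
        rfl
    _ ≤ ∫ v, price (comb lam N₁ N₂) v ∂F :=
        integral_mono_ae ((hint₁.const_mul lam).add (hint₂.const_mul (1 - lam)))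
          hintc key


end RN
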